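/- arXiv:2405.18341 — 3 statements merged into one kernel-verified Lean document; each statement's English description precedes it below -/
import Mathlib

section
/- The RDS integral of a step function is independent of the chosen partition: if f is a step function on [a,b] with respect to both partitions P and Q, and α is of bounded variation on [a,b], then the RDS step-function integrals of f with respect to α computed via P and via Q are equal. -/
open Set Filter Topology
open scoped Classical

noncomputable section

/-- A partition `a = x 0 < x 1 < ... < x n = b` of `[a,b]`. -/
structure RDSPartition (a b : ℝ) where
  n : ℕ
  x : ℕ → ℝ
  mono : ∀ i, i < n → x i < x (i + 1)
  first : x 0 = a
  last : x n = b

/-- Right limit `α(t+)`, with the convention `α(b+) = α(b)` at the right endpoint. -/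
def rLim (b : ℝ) (α : ℝ → ℝ) (t : ℝ) : ℝ :=
  if t < b then Function.rightLim α t else α t

/-- Left limit `α(t-)`, with the convention `α(a-) = α(a)` at the left endpoint. -/
def lLim (a : ℝ) (α : ℝ → ℝ) (t : ℝ) : ℝ :=
  if a < t then Function.leftLim α t else α t

/-- `α`-length of the singleton `{t}` inside `[a,b]`: `α(t+) - α(t-)`. -/
def muPt (a b : ℝ) (α : ℝ → ℝ) (t : ℝ) : ℝ :=
  rLim b α t - lLim a α t

/-- `α`-length of the open interval `(c,d)` inside `[a,b]`: `α(d-) - α(c+)`. -/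
def muIoo (a b : ℝ) (α : ℝ → ℝ) (c d : ℝ) : ℝ :=
  lLim a α d - rLim b α c

/-- `f` is a step function with respect to the partition `P`: it is constant on each
open subinterval `(x (i-1), x i)` of `P`. -/
def IsStepOn (a b : ℝ) (f : ℝ → ℝ) (P : RDSPartition a b) : Prop :=
  ∀ i, i < P.n → ∀ s ∈ Set.Ioo (P.x i) (P.x (i + 1)),
    f s = f ((P.x i + P.x (i + 1)) / 2)

/-- The RDS integral of a step function with respect to the partition `P`:
`Σ_{i=0}^n f(x_i) μ_α({x_i}) + Σ_{i=1}^n c_i μ_α(I_i)`. -/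
def stepInt (a b : ℝ) (α : ℝ → ℝ) (P : RDSPartition a b) (f : ℝ → ℝ) : ℝ :=
  (∑ i ∈ Finset.range (P.n + 1), f (P.x i) * muPt a b α (P.x i)) +
    ∑ i ∈ Finset.range P.n,
      f ((P.x i + P.x (i + 1)) / 2) * muIoo a b α (P.x i) (P.x (i + 1))

/-- Upper envelope: infimum of RDS step integrals of step functions above `f` on `[a,b]`. -/
def upperRDS (a b : ℝ) (α f : ℝ → ℝ) : ℝ :=
  sInf { r | ∃ (u : ℝ → ℝ) (P : RDSPartition a b), IsStepOn a b u P ∧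
    (∀ t ∈ Set.Icc a b, f t ≤ u t) ∧ r = stepInt a b α P u }

/-- Lower envelope: supremum of RDS step integrals of step functions below `f` on `[a,b]`. -/
def lowerRDS (a b : ℝ) (α f : ℝ → ℝ) : ℝ :=
  sSup { r | ∃ (v : ℝ → ℝ) (P : RDSPartition a b), IsStepOn a b v P ∧
    (∀ t ∈ Set.Icc a b, v t ≤ f t) ∧ r = stepInt a b α P v }

/-- RDS integrability with respect to an increasing integrator. -/
def RDSIntegrableInc (a b : ℝ) (α f : ℝ → ℝ) : Prop :=
  lowerRDS a b α f = upperRDS a b α f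

/-- The RDS integral with respect to an increasing integrator. -/
def RDSIntegralInc (a b : ℝ) (α f : ℝ → ℝ) : ℝ := upperRDS a b α f

/-- RDS integrability with respect to a BV integrator: some Jordan decomposition
into increasing functions works. -/
def RDSIntegrable (a b : ℝ) (α f : ℝ → ℝ) : Prop :=
  ∃ αp αm : ℝ → ℝ, MonotoneOn αp (Set.Icc a b) ∧ MonotoneOn αm (Set.Icc a b) ∧
    (∀ t ∈ Set.Icc a b, α t = αp t - αm t) ∧
    RDSIntegrableInc a b αp f ∧ RDSIntegrableInc a b αm f

/-- The RDS integral with respect to a BV integrator. -/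
def RDSIntegral (a b : ℝ) (α f : ℝ → ℝ) : ℝ :=
  if h : RDSIntegrable a b α f then
    RDSIntegralInc a b h.choose f - RDSIntegralInc a b h.choose_spec.choose f
  else 0

/-- `f` is bounded on `[a,b]`. -/
def BddOn (a b : ℝ) (f : ℝ → ℝ) : Prop :=
  ∃ M : ℝ, ∀ t ∈ Set.Icc a b, |f t| ≤ M

end


noncomputable section AuxRDS

variable (a b : ℝ) (α f : ℝ → ℝ)

def pSum (L : List ℝ) : ℝ := (L.map (fun t => f t * muPt a b α t)).sum

def iSum : List ℝ → ℝ
  | u :: v :: rest => f ((u + v) / 2) * muIoo a b α u v + iSum (v :: rest)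
  | _ => 0

def tInt (L : List ℝ) : ℝ := pSum a b α f L + iSum a b α f L

lemma iSum_single (u : ℝ) : iSum a b α f [u] = 0 := rfl

lemma iSum_cons₂ (u v : ℝ) (l : List ℝ) :
    iSum a b α f (u :: v :: l) = f ((u + v) / 2) * muIoo a b α u v + iSum a b α f (v :: l) := rfl

lemma iSum_append : ∀ (xs : List ℝ) (u : ℝ) (ys : List ℝ),
    iSum a b α f (xs ++ u :: ys) = iSum a b α f (xs ++ [u]) + iSum a b α f (u :: ys)
  | [], u, ys => by simp [iSum_single]
  | [x], u, ys => by simp only [List.cons_append, List.nil_append, iSum_cons₂, iSum_single]; ring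
  | x :: y :: xs, u, ys => by
    have ih := iSum_append (y :: xs) u ys
    simp only [List.cons_append] at ih ⊢
    rw [iSum_cons₂, iSum_cons₂, ih]
    ring

lemma pSum_range (x : ℕ → ℝ) (n : ℕ) :
    pSum a b α f ((List.range n).map x) = ∑ i ∈ Finset.range n, f (x i) * muPt a b α (x i) := by
  induction n with
  | zero => simp [pSum]
  | succ n ih =>
    rw [List.range_succ, Finset.sum_range_succ, ← ih]
    simp [pSum]

lemma iSum_range : ∀ (n : ℕ) (x : ℕ → ℝ),
    iSum a b α f ((List.range (n + 1)).map x)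
      = ∑ i ∈ Finset.range n, f ((x i + x (i + 1)) / 2) * muIoo a b α (x i) (x (i + 1))
  | 0, x => by simp [List.range_succ, iSum_single]
  | n + 1, x => by
    have hexp : ∀ (m : ℕ) (y : ℕ → ℝ), (List.range (m + 1)).map y
        = y 0 :: (List.range m).map (fun i => y (i + 1)) := by
      intro m y
      rw [List.range_succ_eq_map, List.map_cons, List.map_map]
      rfl
    have ih := iSum_range n (fun i => x (i + 1))
    simp only [hexp] at ih ⊢
    rw [iSum_cons₂, ih, Finset.sum_range_succ']
    ring

lemma tInt_insert (xs ys : List ℝ) (u t v : ℝ) (hut : u < t) (htv : t < v)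
    (hc : ∀ s ∈ Set.Ioo u v, f s = f ((u + v) / 2)) :
    tInt a b α f (xs ++ u :: t :: v :: ys) = tInt a b α f (xs ++ u :: v :: ys) := by
  have h1 := iSum_append a b α f xs u (t :: v :: ys)
  have h2 := iSum_append a b α f xs u (v :: ys)
  have e1 : f ((u + t) / 2) = f ((u + v) / 2) := hc _ ⟨by linarith, by linarith⟩
  have e2 : f ((t + v) / 2) = f ((u + v) / 2) := hc _ ⟨by linarith, by linarith⟩
  have e3 : f t = f ((u + v) / 2) := hc _ ⟨hut, htv⟩
  simp only [tInt, pSum, List.map_append, List.sum_append, List.map_cons, List.sum_cons,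
    h1, h2, iSum_cons₂, e1, e2, e3]
  simp only [muPt, muIoo]
  ring

lemma exists_split : ∀ (L : List ℝ) (t : ℝ), t ∈ L → L.head? ≠ some t →
    L.getLast? ≠ some t → ∃ xs u v ys, L = xs ++ u :: t :: v :: ys := by
  intro L
  induction L with
  | nil => intro t h; simp at h
  | cons p rest ih =>
    intro t hmem hhead hlast
    have hne : t ≠ p := by intro h; subst h; simp at hhead
    have hmem' : t ∈ rest := by
      rcases List.mem_cons.1 hmem with h | h
      · exact absurd h hne
      · exact h
    rcases rest with _ | ⟨q, rest'⟩
    · simp at hmem'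
    · by_cases htq : t = q
      · subst htq
        rcases rest' with _ | ⟨v, ys⟩
        · simp at hlast
        · exact ⟨[], p, v, ys, by simp⟩
      · have hlast' : (q :: rest').getLast? ≠ some t := by
          rwa [List.getLast?_cons_cons] at hlast
        obtain ⟨xs, u, v, ys, h⟩ := ih t hmem'
          (by simp only [List.head?_cons, Ne, Option.some.injEq]; exact fun h => htq h.symm)
          hlast'
        exact ⟨p :: xs, u, v, ys, by rw [h]; rfl⟩

lemma head?_eq_of_sorted (L : List ℝ) (c : ℝ) (hs : L.Pairwise (· < ·)) (hc : c ∈ L)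
    (hmin : ∀ w ∈ L, c ≤ w) : L.head? = some c := by
  rcases L with _ | ⟨p, rest⟩
  · simp at hc
  · have hpc : p = c := by
      refine le_antisymm ?_ (hmin p (List.mem_cons_self))
      rcases List.mem_cons.1 hc with h | h
      · exact h ▸ le_rfl
      · exact (List.rel_of_pairwise_cons hs h).le
    simp [hpc]

lemma getLast?_eq_of_sorted : ∀ (L : List ℝ) (c : ℝ), L.Pairwise (· < ·) → c ∈ L →
    (∀ w ∈ L, w ≤ c) → L.getLast? = some c
  | [], c => by simp
  | [p], c => by intro _ hc _; simp at hc; simp [hc]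
  | p :: q :: rest, c => by
    intro hs hc hmax
    rw [List.getLast?_cons_cons]
    refine getLast?_eq_of_sorted (q :: rest) c hs.of_cons ?_
      (fun w hw => hmax w (List.mem_cons_of_mem _ hw))
    rcases List.mem_cons.1 hc with h | h
    · exfalso
      have h1 : p < q := List.rel_of_pairwise_cons hs (List.mem_cons_self)
      have h2 : q ≤ c := hmax q (List.mem_cons_of_mem _ (List.mem_cons_self))
      rw [← h] at h1
      linarith
    · exact h

end AuxRDS

noncomputable section AuxRDS2

variable (a b : ℝ) (α f : ℝ → ℝ)

lemma refine_tInt (S₀ : Finset ℝ) (ha0 : a ∈ S₀) (hb0 : b ∈ S₀)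
    (hC : ∀ u v : ℝ, u ∈ Set.Icc a b → v ∈ Set.Icc a b → (∀ w ∈ S₀, w ∉ Set.Ioo u v) →
      ∀ s₁ ∈ Set.Ioo u v, ∀ s₂ ∈ Set.Ioo u v, f s₁ = f s₂) :
    ∀ (k : ℕ) (L : List ℝ), L.length ≤ k → L.Pairwise (· < ·) → a ∈ L → b ∈ L →
      (∀ w ∈ L, w ∈ Set.Icc a b) → S₀ ⊆ L.toFinset →
      tInt a b α f L = tInt a b α f (S₀.sort (· ≤ ·)) := by
  intro k
  induction k with
  | zero =>
    intro L hlen _ haL _ _ _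
    rw [List.length_eq_zero_iff.1 (Nat.le_zero.1 hlen)] at haL
    simp at haL
  | succ k ih =>
    intro L hlen hs haL hbL hIcc hsub
    have hnd : L.Nodup := hs.nodup
    by_cases hfull : L.toFinset ⊆ S₀
    · have hEq : L.toFinset = S₀ := subset_antisymm hfull hsub
      have hperm : L.Perm (S₀.sort (· ≤ ·)) :=
        List.perm_of_nodup_nodup_toFinset_eq hnd (S₀.sort_nodup _)
          (by rw [hEq, Finset.sort_toFinset])
      rw [List.Perm.eq_of_pairwise' (hs.imp le_of_lt) (S₀.pairwise_sort _) hperm]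
    · obtain ⟨t, htL, htS⟩ := Finset.not_subset.1 hfull
      have htL' : t ∈ L := List.mem_toFinset.1 htL
      have hta : t ≠ a := fun h => htS (h ▸ ha0)
      have htb : t ≠ b := fun h => htS (h ▸ hb0)
      have hhead : L.head? = some a :=
        head?_eq_of_sorted L a hs haL (fun w hw => (hIcc w hw).1)
      have hlast : L.getLast? = some b :=
        getLast?_eq_of_sorted L b hs hbL (fun w hw => (hIcc w hw).2)
      obtain ⟨xs, u, v, ys, hsplit⟩ := exists_split L t htL'
        (by rw [hhead]; simpa using Ne.symm hta)
        (by rw [hlast]; simpa using Ne.symm htb)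
      have hsL : List.Pairwise (· < ·) (xs ++ u :: t :: v :: ys) := hsplit ▸ hs
      obtain ⟨hxs, hmid, hcross⟩ := List.pairwise_append.1 hsL
      have hut : u < t := List.rel_of_pairwise_cons hmid (by simp : t ∈ t :: v :: ys)
      have htv : t < v := List.rel_of_pairwise_cons hmid.of_cons (by simp : v ∈ v :: ys)
      -- only t lies in (u, v) among elements of L
      have honly : ∀ w ∈ L, w ∈ Set.Ioo u v → w = t := by
        intro w hw hwuv
        rw [hsplit] at hw
        rcases List.mem_append.1 hw with h | h
        · exact absurd (hcross w h u (by simp)) (not_lt.2 hwuv.1.le)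
        · rcases List.mem_cons.1 h with rfl | h
          · exact absurd hwuv.1 (lt_irrefl _)
          rcases List.mem_cons.1 h with rfl | h
          · rfl
          rcases List.mem_cons.1 h with rfl | h
          · exact absurd hwuv.2 (lt_irrefl _)
          · exact absurd (List.rel_of_pairwise_cons hmid.of_cons.of_cons h)
              (not_lt.2 hwuv.2.le)
      have hgap : ∀ w ∈ S₀, w ∉ Set.Ioo u v := by
        intro w hw hwuv
        exact htS ((honly w (List.mem_toFinset.1 (hsub hw)) hwuv) ▸ hw)
      have huL : u ∈ L := by rw [hsplit]; simp
      have hvL : v ∈ L := by rw [hsplit]; simp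
      have huv : u < v := hut.trans htv
      have hc : ∀ s ∈ Set.Ioo u v, f s = f ((u + v) / 2) := by
        intro s hs'
        exact hC u v (hIcc u huL) (hIcc v hvL) hgap s hs' ((u + v) / 2)
          ⟨by linarith, by linarith⟩
      -- the shorter list
      have hsub' : (xs ++ u :: v :: ys).Sublist L := by
        rw [hsplit]
        exact (List.Sublist.cons₂ u (List.sublist_cons_self t (v :: ys))).append_left xs
      have hs' : (xs ++ u :: v :: ys).Pairwise (· < ·) := hs.sublist hsub'
      have hmem' : ∀ w ∈ L, w ≠ t → w ∈ xs ++ u :: v :: ys := by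
        intro w hw hwt
        rw [hsplit] at hw
        simp only [List.mem_append, List.mem_cons] at hw ⊢
        tauto
      have hlen' : (xs ++ u :: v :: ys).length ≤ k := by
        have : L.length = (xs ++ u :: v :: ys).length + 1 := by
          rw [hsplit]; simp; omega
        omega
      rw [hsplit, tInt_insert a b α f xs ys u t v hut htv hc]
      exact ih (xs ++ u :: v :: ys) hlen' hs'
        (hmem' a haL (Ne.symm hta)) (hmem' b hbL (Ne.symm htb))
        (fun w hw => hIcc w (hsub'.mem hw))
        (fun w hw => List.mem_toFinset.2
          (hmem' w (List.mem_toFinset.1 (hsub hw)) (fun h => htS (h ▸ hw))))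

end AuxRDS2

noncomputable section AuxRDS3

variable (a b : ℝ) (α f : ℝ → ℝ)

lemma px_strict (P : RDSPartition a b) : ∀ i j, i < j → j ≤ P.n → P.x i < P.x j := by
  intro i j hij hj
  induction j with
  | zero => omega
  | succ j ihj =>
    rcases Nat.lt_succ_iff_lt_or_eq.1 hij with h | h
    · exact (ihj h (by omega)).trans (P.mono j (by omega))
    · exact h ▸ P.mono j (by omega)

lemma px_mem (P : RDSPartition a b) (i : ℕ) (hi : i ≤ P.n) : P.x i ∈ Set.Icc a b := by
  constructor
  · rcases Nat.eq_zero_or_pos i with h | h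
    · rw [h, P.first]
    · have := (px_strict a b P 0 i h hi).le
      rwa [P.first] at this
  · rcases eq_or_lt_of_le hi with h | h
    · rw [h, P.last]
    · have := (px_strict a b P i P.n h le_rfl).le
      rwa [P.last] at this

def ptsP (P : RDSPartition a b) : Finset ℝ := (Finset.range (P.n + 1)).image P.x

def listP (P : RDSPartition a b) : List ℝ := (List.range (P.n + 1)).map P.x

lemma listP_toFinset (P : RDSPartition a b) : (listP a b P).toFinset = ptsP a b P := by
  ext w
  simp [listP, ptsP, Nat.lt_succ_iff]

lemma listP_sorted (P : RDSPartition a b) : (listP a b P).Pairwise (· < ·) := by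
  rw [listP, List.pairwise_map]
  refine (List.pairwise_lt_range (n := P.n + 1)).imp_of_mem ?_
  intro i j hi hj hij
  exact px_strict a b P i j hij (Nat.lt_succ_iff.1 (List.mem_range.1 hj))

lemma a_mem_listP (P : RDSPartition a b) : a ∈ listP a b P :=
  List.mem_map.2 ⟨0, by simp, P.first⟩

lemma b_mem_listP (P : RDSPartition a b) : b ∈ listP a b P :=
  List.mem_map.2 ⟨P.n, by simp, P.last⟩

lemma listP_Icc (P : RDSPartition a b) : ∀ w ∈ listP a b P, w ∈ Set.Icc a b := by
  intro w hw
  obtain ⟨i, hi, rfl⟩ := List.mem_map.1 hw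
  exact px_mem a b P i (Nat.lt_succ_iff.1 (List.mem_range.1 hi))

lemma ptsP_Icc (P : RDSPartition a b) : ∀ w ∈ ptsP a b P, w ∈ Set.Icc a b := by
  intro w hw
  obtain ⟨i, hi, rfl⟩ := Finset.mem_image.1 hw
  exact px_mem a b P i (Nat.lt_succ_iff.1 (Finset.mem_range.1 hi))

lemma a_mem_ptsP (P : RDSPartition a b) : a ∈ ptsP a b P :=
  Finset.mem_image.2 ⟨0, by simp, P.first⟩

lemma b_mem_ptsP (P : RDSPartition a b) : b ∈ ptsP a b P :=
  Finset.mem_image.2 ⟨P.n, by simp, P.last⟩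

lemma stepInt_eq_tInt (P : RDSPartition a b) :
    stepInt a b α P f = tInt a b α f (listP a b P) := by
  rw [stepInt, tInt, listP, pSum_range, iSum_range]

lemma stepOn_gap (P : RDSPartition a b) (hP : IsStepOn a b f P) :
    ∀ u v : ℝ, u ∈ Set.Icc a b → v ∈ Set.Icc a b → (∀ w ∈ ptsP a b P, w ∉ Set.Ioo u v) →
      ∀ s₁ ∈ Set.Ioo u v, ∀ s₂ ∈ Set.Ioo u v, f s₁ = f s₂ := by
  intro u v hu hv hgap s₁ hs₁ s₂ hs₂
  set i := Nat.findGreatest (fun i => P.x i ≤ u) P.n with hi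
  have h0 : P.x 0 ≤ u := le_of_eq_of_le P.first hu.1
  have hspec : P.x i ≤ u :=
    Nat.findGreatest_spec (P := fun j => P.x j ≤ u) (Nat.zero_le P.n) h0
  have hile : i ≤ P.n := Nat.findGreatest_le (P := fun j => P.x j ≤ u) P.n
  have hin : i < P.n := by
    rcases lt_or_eq_of_le hile with h | h
    · exact h
    · exfalso
      rw [h, P.last] at hspec
      have := hs₁.1; have := hs₁.2; have := hv.2
      linarith
  have hgt : u < P.x (i + 1) :=
    lt_of_not_ge (Nat.findGreatest_is_greatest (P := fun j => P.x j ≤ u) (n := P.n)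
      (by rw [← hi]; exact Nat.lt_succ_self i) (by omega))
  have hmem : P.x (i + 1) ∈ ptsP a b P :=
    Finset.mem_image.2 ⟨i + 1, Finset.mem_range.2 (by omega), rfl⟩
  have hge : v ≤ P.x (i + 1) := by
    by_contra h
    push_neg at h
    exact hgap _ hmem ⟨hgt, h⟩
  have hsub : Set.Ioo u v ⊆ Set.Ioo (P.x i) (P.x (i + 1)) := fun s hs =>
    ⟨lt_of_le_of_lt hspec hs.1, lt_of_lt_of_le hs.2 hge⟩
  rw [hP i hin s₁ (hsub hs₁), hP i hin s₂ (hsub hs₂)]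

end AuxRDS3


theorem stmt0 (a b : ℝ) (hab : a < b) (α : ℝ → ℝ)
    (hα : BoundedVariationOn α (Set.Icc a b)) (f : ℝ → ℝ)
    (P Q : RDSPartition a b) (hP : IsStepOn a b f P) (hQ : IsStepOn a b f Q) :
    stepInt a b α P f = stepInt a b α Q f := by
  classical
  set M : List ℝ := (ptsP a b P ∪ ptsP a b Q).sort (· ≤ ·) with hM
  have hMs : M.Pairwise (· < ·) := (Finset.sortedLT_sort _).pairwise
  have hMfin : M.toFinset = ptsP a b P ∪ ptsP a b Q := Finset.sort_toFinset _ _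
  have haM : a ∈ M := (Finset.mem_sort _).2 (Finset.mem_union_left _ (a_mem_ptsP a b P))
  have hbM : b ∈ M := (Finset.mem_sort _).2 (Finset.mem_union_left _ (b_mem_ptsP a b P))
  have hMIcc : ∀ w ∈ M, w ∈ Set.Icc a b := by
    intro w hw
    rcases Finset.mem_union.1 ((Finset.mem_sort _).1 hw) with h | h
    · exact ptsP_Icc a b P w h
    · exact ptsP_Icc a b Q w h
  have key : ∀ (R : RDSPartition a b), IsStepOn a b f R →
      (ptsP a b R ⊆ M.toFinset) → stepInt a b α R f = tInt a b α f M := by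
    intro R hR hsub
    have e1 : tInt a b α f (listP a b R) = tInt a b α f ((ptsP a b R).sort (· ≤ ·)) :=
      refine_tInt a b α f (ptsP a b R) (a_mem_ptsP a b R) (b_mem_ptsP a b R)
        (stepOn_gap a b f R hR) (listP a b R).length (listP a b R) le_rfl
        (listP_sorted a b R) (a_mem_listP a b R) (b_mem_listP a b R)
        (listP_Icc a b R) (by rw [listP_toFinset])
    have e2 : tInt a b α f M = tInt a b α f ((ptsP a b R).sort (· ≤ ·)) :=
      refine_tInt a b α f (ptsP a b R) (a_mem_ptsP a b R) (b_mem_ptsP a b R)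
        (stepOn_gap a b f R hR) M.length M le_rfl hMs haM hbM hMIcc hsub
    rw [stepInt_eq_tInt, e1, e2]
  rw [key P hP (by rw [hMfin]; exact Finset.subset_union_left),
    key Q hQ (by rw [hMfin]; exact Finset.subset_union_right)]
end

section
/- The RDS step-function integral is additive over subintervals: for any step function f on [a,b], any α of bounded variation, and any m ∈ (a,b), the RDS integral of f over [a,m] plus the RDS integral of f over [m,b] equals the RDS integral of f over [a,b]. -/
open Set Filter Topology
open scoped Classical

section RDSAux

open Function

lemma myRightLim_const {f : ℝ → ℝ} {x d c : ℝ} (hd : x < d)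
    (h : ∀ y ∈ Set.Ioo x d, f y = c) : Function.rightLim f x = c := by
  apply rightLim_eq_of_tendsto
  apply Tendsto.congr' _ (tendsto_const_nhds (α := ℝ) (x := c))
  filter_upwards [Ioo_mem_nhdsGT_of_mem ⟨le_refl x, hd⟩] with y hy
  exact (h y hy).symm

lemma myLeftLim_const {f : ℝ → ℝ} {x d c : ℝ} (hd : d < x)
    (h : ∀ y ∈ Set.Ioo d x, f y = c) : Function.leftLim f x = c := by
  apply leftLim_eq_of_tendsto
  apply Tendsto.congr' _ (tendsto_const_nhds (α := ℝ) (x := c))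
  filter_upwards [Ioo_mem_nhdsLT_of_mem ⟨hd, le_refl x⟩] with y hy
  exact (h y hy).symm

/-- The local jump contribution of `f` at `x` against `α`. -/
noncomputable def gfun (f α : ℝ → ℝ) (x : ℝ) : ℝ :=
  (f x - Function.rightLim f x) * Function.rightLim α x +
    (Function.leftLim f x - f x) * Function.leftLim α x

/-- RDSPartition-free value of the RDS step integral. -/
noncomputable def phi (a b : ℝ) (α f : ℝ → ℝ) : ℝ :=
  f b * α b - f a * α a + (f a - Function.rightLim f a) * Function.rightLim α a +
    (Function.leftLim f b - f b) * Function.leftLim α b + ∑ᶠ x ∈ Set.Ioo a b, gfun f α x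

lemma px_lt {a b : ℝ} (P : RDSPartition a b) {i j : ℕ} (hij : i < j) (hj : j ≤ P.n) :
    P.x i < P.x j := by
  induction j with
  | zero => omega
  | succ j ih =>
    have h1 : P.x j < P.x (j + 1) := P.mono j (by omega)
    rcases Nat.lt_succ_iff_lt_or_eq.mp hij with h | h
    · exact (ih h (by omega)).trans h1
    · subst h; exact h1

lemma exists_cell {a b : ℝ} (P : RDSPartition a b) (k : ℕ) (hk : k ≤ P.n) {x : ℝ}
    (h0 : P.x 0 ≤ x) (hx : x < P.x k) :
    ∃ i, i < k ∧ P.x i ≤ x ∧ x < P.x (i + 1) := by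
  induction k with
  | zero => exact absurd hx (not_lt.2 h0)
  | succ k ih =>
    by_cases h : x < P.x k
    · obtain ⟨i, hi, h1, h2⟩ := ih (by omega) h
      exact ⟨i, by omega, h1, h2⟩
    · exact ⟨k, by omega, not_lt.1 h, hx⟩

lemma gfun_eq_zero {a b : ℝ} {f α : ℝ → ℝ} (P : RDSPartition a b) (hP : IsStepOn a b f P)
    {x : ℝ} (hx : x ∈ Set.Ioo a b) (hnx : ∀ i, i ≤ P.n → P.x i ≠ x) : gfun f α x = 0 := by
  have h0 : P.x 0 ≤ x := by rw [P.first]; exact hx.1.le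
  have hb : x < P.x P.n := by rw [P.last]; exact hx.2
  obtain ⟨i, hi, h1, h2⟩ := exists_cell P P.n le_rfl h0 hb
  have hlt : P.x i < x := lt_of_le_of_ne h1 (hnx i (by omega))
  have hc := hP i hi
  have hfx : f x = f ((P.x i + P.x (i + 1)) / 2) := hc x ⟨hlt, h2⟩
  have hr : Function.rightLim f x = f ((P.x i + P.x (i + 1)) / 2) :=
    myRightLim_const h2 (fun y hy => hc y ⟨hlt.trans hy.1, hy.2⟩)
  have hl : Function.leftLim f x = f ((P.x i + P.x (i + 1)) / 2) :=
    myLeftLim_const hlt (fun y hy => hc y ⟨hy.1, hy.2.trans h2⟩)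
  simp [gfun, hfx, hr, hl]

lemma gfun_support {a b : ℝ} {f : ℝ → ℝ} (α : ℝ → ℝ) (P : RDSPartition a b)
    (hP : IsStepOn a b f P) :
    Set.Ioo a b ∩ Function.support (gfun f α) ⊆ P.x '' Set.Iic P.n := by
  rintro x ⟨hx, hs⟩
  by_contra h
  exact hs (gfun_eq_zero P hP hx (fun i hi he => h ⟨i, hi, he⟩))

lemma finsum_eq {a b : ℝ} {f : ℝ → ℝ} (α : ℝ → ℝ) (P : RDSPartition a b) (hab : a < b)
    (hP : IsStepOn a b f P) :
    ∑ᶠ x ∈ Set.Ioo a b, gfun f α x = ∑ i ∈ Finset.Ico 1 P.n, gfun f α (P.x i) := by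
  rw [finsum_mem_eq_sum_of_inter_support_eq (gfun f α)
      (t := Finset.image P.x (Finset.Ico 1 P.n)) ?_]
  · apply Finset.sum_image
    intro i hi j hj he
    obtain ⟨_, hi2⟩ := Finset.mem_Ico.1 hi
    obtain ⟨_, hj2⟩ := Finset.mem_Ico.1 hj
    by_contra hne
    rcases lt_or_gt_of_ne hne with h | h
    · exact absurd he (ne_of_lt (px_lt P h (by omega)))
    · exact absurd he.symm (ne_of_lt (px_lt P h (by omega)))
  · apply Set.Subset.antisymm
    · rintro x ⟨hx, hs⟩
      obtain ⟨i, hi, rfl⟩ := gfun_support α P hP ⟨hx, hs⟩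
      have hi' : i ≤ P.n := hi
      have h0 : i ≠ 0 := by
        rintro rfl; rw [P.first] at hx; exact lt_irrefl a hx.1
      have hnn : i ≠ P.n := by
        rintro rfl; rw [P.last] at hx; exact lt_irrefl b hx.2
      exact ⟨Finset.mem_coe.2 (Finset.mem_image.2 ⟨i, Finset.mem_Ico.2 ⟨by omega, by omega⟩, rfl⟩), hs⟩
    · rintro x ⟨hx, hs⟩
      obtain ⟨i, hi, rfl⟩ := Finset.mem_image.1 (Finset.mem_coe.1 hx)
      obtain ⟨h1, h2⟩ := Finset.mem_Ico.1 hi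
      refine ⟨⟨?_, ?_⟩, hs⟩
      · have h := px_lt P (show 0 < i by omega) (show i ≤ P.n by omega)
        rwa [P.first] at h
      · have h := px_lt P h2 le_rfl
        rwa [P.last] at h

lemma telescope (n : ℕ) (F c R L : ℕ → ℝ) (A B : ℝ) :
    (∑ i ∈ Finset.range (n + 1 + 1),
        F i * ((if i < n + 1 then R i else B) - (if 0 < i then L i else A)))
      + ∑ i ∈ Finset.range (n + 1), c i * (L (i + 1) - R i)
    = F (n + 1) * B - F 0 * A + (F 0 - c 0) * R 0 + (c n - F (n + 1)) * L (n + 1)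
      + ∑ i ∈ Finset.Ico 1 (n + 1), ((F i - c i) * R i + (c (i - 1) - F i) * L i) := by
  induction n with
  | zero =>
    norm_num [Finset.sum_range_succ]
    ring
  | succ n ih =>
    have e1 : ∀ i ∈ Finset.range (n + 1),
        F i * ((if i < n + 2 then R i else B) - (if 0 < i then L i else A))
          = F i * ((if i < n + 1 then R i else B) - (if 0 < i then L i else A)) := by
      intro i hi
      have h := Finset.mem_range.1 hi
      rw [if_pos (by omega : i < n + 2), if_pos (by omega : i < n + 1)]
    have hA : ∑ i ∈ Finset.range (n + 1 + 1 + 1),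
        F i * ((if i < n + 1 + 1 then R i else B) - (if 0 < i then L i else A))
        = (∑ i ∈ Finset.range (n + 1),
            F i * ((if i < n + 1 then R i else B) - (if 0 < i then L i else A)))
          + F (n + 1) * (R (n + 1) - L (n + 1)) + F (n + 2) * (B - L (n + 2)) := by
      rw [Finset.sum_range_succ, Finset.sum_range_succ, Finset.sum_congr rfl e1,
        if_pos (by omega : n + 1 < n + 1 + 1), if_pos (by omega : 0 < n + 1),
        if_neg (by omega : ¬ (n + 1 + 1 < n + 1 + 1)), if_pos (by omega : 0 < n + 1 + 1)]
    have hA' : ∑ i ∈ Finset.range (n + 1 + 1),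
        F i * ((if i < n + 1 then R i else B) - (if 0 < i then L i else A))
        = (∑ i ∈ Finset.range (n + 1),
            F i * ((if i < n + 1 then R i else B) - (if 0 < i then L i else A)))
          + F (n + 1) * (B - L (n + 1)) := by
      rw [Finset.sum_range_succ, if_neg (by omega : ¬ (n + 1 < n + 1)),
        if_pos (by omega : 0 < n + 1)]
    have hC : ∑ i ∈ Finset.range (n + 1 + 1), c i * (L (i + 1) - R i)
        = (∑ i ∈ Finset.range (n + 1), c i * (L (i + 1) - R i))
          + c (n + 1) * (L (n + 2) - R (n + 1)) := Finset.sum_range_succ _ _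
    have hI : ∑ i ∈ Finset.Ico 1 (n + 1 + 1), ((F i - c i) * R i + (c (i - 1) - F i) * L i)
        = (∑ i ∈ Finset.Ico 1 (n + 1), ((F i - c i) * R i + (c (i - 1) - F i) * L i))
          + ((F (n + 1) - c (n + 1)) * R (n + 1) + (c n - F (n + 1)) * L (n + 1)) := by
      rw [Finset.sum_Ico_succ_top (by omega : 1 ≤ n + 1)]
      norm_num
    rw [hA, hC, hI]
    linear_combination ih - hA'

lemma telescope' (n : ℕ) (hn : 1 ≤ n) (F c R L : ℕ → ℝ) (A B : ℝ) :
    (∑ i ∈ Finset.range (n + 1),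
        F i * ((if i < n then R i else B) - (if 0 < i then L i else A)))
      + ∑ i ∈ Finset.range n, c i * (L (i + 1) - R i)
    = F n * B - F 0 * A + (F 0 - c 0) * R 0 + (c (n - 1) - F n) * L n
      + ∑ i ∈ Finset.Ico 1 n, ((F i - c i) * R i + (c (i - 1) - F i) * L i) := by
  obtain ⟨n', rfl⟩ : ∃ n', n = n' + 1 := ⟨n - 1, by omega⟩
  simpa using telescope n' F c R L A B

lemma stepInt_eq_phi {a b : ℝ} {f : ℝ → ℝ} (α : ℝ → ℝ) (hab : a < b) (P : RDSPartition a b)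
    (hP : IsStepOn a b f P) : stepInt a b α P f = phi a b α f := by
  have hn : 1 ≤ P.n := by
    rcases Nat.eq_zero_or_pos P.n with h | h
    · exfalso
      have hh := P.last
      rw [h, P.first] at hh
      exact hab.ne hh
    · exact h
  have hxb : ∀ i, i < P.n → P.x i < b := fun i hi => by
    have h := px_lt P hi le_rfl
    rwa [P.last] at h
  have hax : ∀ i, 0 < i → i ≤ P.n → a < P.x i := fun i h0 hi => by
    have h := px_lt P h0 hi
    rwa [P.first] at h
  have hpt : ∀ i ∈ Finset.range (P.n + 1),
      f (P.x i) * muPt a b α (P.x i)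
        = f (P.x i) * ((if i < P.n then Function.rightLim α (P.x i) else α b)
            - (if 0 < i then Function.leftLim α (P.x i) else α a)) := by
    intro i hi
    have hi' : i ≤ P.n := by
      have := Finset.mem_range.1 hi; omega
    unfold muPt rLim lLim
    congr 1
    congr 1
    · by_cases h : i < P.n
      · rw [if_pos (hxb i h), if_pos h]
      · have hh : i = P.n := by omega
        subst hh
        rw [P.last, if_neg (lt_irrefl b), if_neg h]
    · by_cases h : 0 < i
      · rw [if_pos (hax i h hi'), if_pos h]
      · have hh : i = 0 := by omega
        subst hh
        rw [P.first, if_neg (lt_irrefl a), if_neg h]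
  have hioo : ∀ i ∈ Finset.range P.n,
      f ((P.x i + P.x (i + 1)) / 2) * muIoo a b α (P.x i) (P.x (i + 1))
        = f ((P.x i + P.x (i + 1)) / 2)
            * (Function.leftLim α (P.x (i + 1)) - Function.rightLim α (P.x i)) := by
    intro i hi
    have hi' : i < P.n := Finset.mem_range.1 hi
    unfold muIoo rLim lLim
    rw [if_pos (hax (i + 1) (by omega) (by omega)), if_pos (hxb i hi')]
  have hr0 : Function.rightLim f a = f ((a + P.x (0 + 1)) / 2) := by
    have h := myRightLim_const (P.mono 0 hn) (fun y hy => hP 0 hn y hy)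
    rwa [P.first] at h
  have hlb : Function.leftLim f b = f ((P.x (P.n - 1) + P.x (P.n - 1 + 1)) / 2) := by
    have hh : P.n - 1 + 1 = P.n := by omega
    have hd : P.x (P.n - 1) < P.x P.n := by
      have := P.mono (P.n - 1) (by omega)
      rwa [hh] at this
    have h := myLeftLim_const hd (fun y hy =>
      hP (P.n - 1) (by omega) y (by rw [hh]; exact hy))
    rwa [P.last] at h
  have hsum : ∀ i ∈ Finset.Ico 1 P.n, gfun f α (P.x i) =
      (f (P.x i) - f ((P.x i + P.x (i + 1)) / 2)) * Function.rightLim α (P.x i)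
        + (f ((P.x (i - 1) + P.x (i - 1 + 1)) / 2) - f (P.x i)) * Function.leftLim α (P.x i) := by
    intro i hi
    obtain ⟨h1, h2⟩ := Finset.mem_Ico.1 hi
    have hh : i - 1 + 1 = i := by omega
    have hr : Function.rightLim f (P.x i) = f ((P.x i + P.x (i + 1)) / 2) :=
      myRightLim_const (P.mono i h2) (fun y hy => hP i h2 y hy)
    have hl : Function.leftLim f (P.x i) = f ((P.x (i - 1) + P.x (i - 1 + 1)) / 2) := by
      have hd : P.x (i - 1) < P.x i := by
        have := P.mono (i - 1) (by omega)
        rwa [hh] at this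
      exact myLeftLim_const hd (fun y hy =>
        hP (i - 1) (by omega) y (by rw [hh]; exact hy))
    unfold gfun
    rw [hr, hl]
  have T := telescope' P.n hn (fun i => f (P.x i)) (fun i => f ((P.x i + P.x (i + 1)) / 2))
      (fun i => Function.rightLim α (P.x i)) (fun i => Function.leftLim α (P.x i)) (α a) (α b)
  unfold stepInt phi
  rw [Finset.sum_congr rfl hpt, Finset.sum_congr rfl hioo, finsum_eq α P hab hP,
    Finset.sum_congr rfl hsum, hr0, hlb, T, P.first, P.last]

lemma phi_add {a m b : ℝ} (ham : a < m) (hmb : m < b) (f α : ℝ → ℝ)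
    (hfin : (Set.Ioo a b ∩ Function.support (gfun f α)).Finite) :
    phi a m α f + phi m b α f = phi a b α f := by
  have hsub1 : Set.Ioo a m ⊆ Set.Ioo a b := Set.Ioo_subset_Ioo le_rfl hmb.le
  have hsub2 : ({m} : Set ℝ) ∪ Set.Ioo m b ⊆ Set.Ioo a b := by
    rintro x (rfl | hx)
    · exact ⟨ham, hmb⟩
    · exact ⟨ham.trans hx.1, hx.2⟩
  have hsplit : Set.Ioo a b = Set.Ioo a m ∪ (({m} : Set ℝ) ∪ Set.Ioo m b) := by
    rw [show ({m} : Set ℝ) ∪ Set.Ioo m b = insert m (Set.Ioo m b) from (Set.insert_eq m _).symm,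
      Set.Ioo_insert_left hmb, Set.Ioo_union_Ico_eq_Ioo ham hmb.le]
  have h1 : (Set.Ioo a m ∩ Function.support (gfun f α)).Finite :=
    hfin.subset (Set.inter_subset_inter_left _ hsub1)
  have h23 : ((({m} : Set ℝ) ∪ Set.Ioo m b) ∩ Function.support (gfun f α)).Finite :=
    hfin.subset (Set.inter_subset_inter_left _ hsub2)
  have h3 : (Set.Ioo m b ∩ Function.support (gfun f α)).Finite :=
    h23.subset (Set.inter_subset_inter_left _ Set.subset_union_right)
  have hm1 : (({m} : Set ℝ) ∩ Function.support (gfun f α)).Finite :=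
    (Set.finite_singleton m).inter_of_left _
  have hd1 : Disjoint (Set.Ioo a m) (({m} : Set ℝ) ∪ Set.Ioo m b) := by
    rw [Set.disjoint_left]
    rintro x ⟨_, hxm⟩ (rfl | hx)
    · exact lt_irrefl x hxm
    · exact lt_irrefl x (hxm.trans hx.1)
  have hd2 : Disjoint ({m} : Set ℝ) (Set.Ioo m b) := by
    rw [Set.disjoint_left]
    rintro x rfl hx
    exact lt_irrefl x hx.1
  have hmem : ∑ᶠ x ∈ Set.Ioo a b, gfun f α x
      = (∑ᶠ x ∈ Set.Ioo a m, gfun f α x)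
        + (gfun f α m + ∑ᶠ x ∈ Set.Ioo m b, gfun f α x) := by
    rw [hsplit, finsum_mem_union' hd1 h1 h23, finsum_mem_union' hd2 hm1 h3,
      finsum_mem_singleton]
  unfold phi
  rw [hmem]
  unfold gfun
  ring

end RDSAux


theorem stmt3 (a b m : ℝ) (hm : m ∈ Set.Ioo a b) (α f : ℝ → ℝ)
    (hα : BoundedVariationOn α (Set.Icc a b))
    (P : RDSPartition a b) (P₁ : RDSPartition a m) (P₂ : RDSPartition m b)
    (hP : IsStepOn a b f P) (hP₁ : IsStepOn a m f P₁) (hP₂ : IsStepOn m b f P₂) :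
    stepInt a m α P₁ f + stepInt m b α P₂ f = stepInt a b α P f := by
  obtain ⟨ham, hmb⟩ := hm
  have hab : a < b := ham.trans hmb
  rw [stepInt_eq_phi α ham P₁ hP₁, stepInt_eq_phi α hmb P₂ hP₂, stepInt_eq_phi α hab P hP]
  exact phi_add ham hmb f α
    (((Set.finite_Iic P.n).image P.x).subset (gfun_support α P hP))
end

section
/- If α, β are increasing on [a,b], r₁, r₂ > 0, γ = r₁α + r₂β, and a bounded function f is RDS integrable with respect to γ, then f is RDS integrable with respect to α and with respect to β. -/
open Set Filter Topology
open scoped Classical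

section AuxRDS

open Function MeasureTheory

lemma mono_leftLim_rightLim {g : ℝ → ℝ} (hg : Monotone g) (x : ℝ) :
    leftLim (rightLim g) x = leftLim g x := by
  have ne : (𝓝[<] x) ≠ ⊥ := (inferInstance : (𝓝[<] x).NeBot).ne
  refine leftLim_eq_of_tendsto ?_
  apply tendsto_of_tendsto_of_tendsto_of_le_of_le' (hg.tendsto_leftLim x) tendsto_const_nhds
  · exact Filter.Eventually.of_forall fun y => hg.le_rightLim le_rfl
  · filter_upwards [self_mem_nhdsWithin] with y hy
    exact hg.rightLim_le_leftLim hy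

lemma meas_singleton' {g : ℝ → ℝ} (hg : Monotone g) (t : ℝ) :
    hg.stieltjesFunction.measure {t} = ENNReal.ofReal (rightLim g t - leftLim g t) := by
  have hco : ⇑hg.stieltjesFunction = rightLim g := rfl
  rw [StieltjesFunction.measure_singleton, hco, mono_leftLim_rightLim hg]

lemma meas_Ioo' {g : ℝ → ℝ} (hg : Monotone g) (c d : ℝ) :
    hg.stieltjesFunction.measure (Set.Ioo c d) = ENNReal.ofReal (leftLim g d - rightLim g c) := by
  have hco : ⇑hg.stieltjesFunction = rightLim g := rfl
  rw [StieltjesFunction.measure_Ioo, hco, mono_leftLim_rightLim hg]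

lemma meas_singleton_toReal {g : ℝ → ℝ} (hg : Monotone g) (t : ℝ) :
    (hg.stieltjesFunction.measure {t}).toReal = rightLim g t - leftLim g t := by
  rw [meas_singleton' hg, ENNReal.toReal_ofReal (sub_nonneg.2 (hg.leftLim_le_rightLim le_rfl))]

lemma meas_Ioo_toReal {g : ℝ → ℝ} (hg : Monotone g) {c d : ℝ} (hcd : c < d) :
    (hg.stieltjesFunction.measure (Set.Ioo c d)).toReal = leftLim g d - rightLim g c := by
  rw [meas_Ioo' hg, ENNReal.toReal_ofReal (sub_nonneg.2 (hg.rightLim_le_leftLim hcd))]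

lemma rightLim_linear {A B : ℝ → ℝ} (hA : Monotone A) (hB : Monotone B) (r₁ r₂ t : ℝ) :
    rightLim (fun s => r₁ * A s + r₂ * B s) t = r₁ * rightLim A t + r₂ * rightLim B t := by
  have ne : (𝓝[>] t) ≠ ⊥ := (inferInstance : (𝓝[>] t).NeBot).ne
  exact rightLim_eq_of_tendsto (((hA.tendsto_rightLim t).const_mul r₁).add
    ((hB.tendsto_rightLim t).const_mul r₂))

lemma leftLim_linear {A B : ℝ → ℝ} (hA : Monotone A) (hB : Monotone B) (r₁ r₂ t : ℝ) :
    leftLim (fun s => r₁ * A s + r₂ * B s) t = r₁ * leftLim A t + r₂ * leftLim B t := by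
  have ne : (𝓝[<] t) ≠ ⊥ := (inferInstance : (𝓝[<] t).NeBot).ne
  exact leftLim_eq_of_tendsto (((hA.tendsto_leftLim t).const_mul r₁).add
    ((hB.tendsto_leftLim t).const_mul r₂))

/-- Monotone extension of a function monotone on `[a,b]` to all of `ℝ`. -/
noncomputable def extF (a b : ℝ) (α : ℝ → ℝ) : ℝ → ℝ := fun t => α (max a (min t b))

lemma extF_mono {a b : ℝ} (hab : a ≤ b) {α : ℝ → ℝ} (hα : MonotoneOn α (Set.Icc a b)) :
    Monotone (extF a b α) := by
  intro s t hst
  have hs : max a (min s b) ∈ Set.Icc a b := ⟨le_max_left _ _, max_le hab (min_le_right _ _)⟩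
  have ht : max a (min t b) ∈ Set.Icc a b := ⟨le_max_left _ _, max_le hab (min_le_right _ _)⟩
  exact hα hs ht (max_le_max le_rfl (min_le_min_right _ hst))

lemma rLim_extF {a b : ℝ} (hab : a < b) {α : ℝ → ℝ} (hα : MonotoneOn α (Set.Icc a b))
    {t : ℝ} (ht : t ∈ Set.Icc a b) : rLim b α t = rightLim (extF a b α) t := by
  rcases lt_or_eq_of_le ht.2 with htb | htb
  · rw [rLim, if_pos htb]
    have hten : Filter.Tendsto α (𝓝[>] t) (𝓝 (rightLim (extF a b α) t)) := by
      apply ((extF_mono hab.le hα).tendsto_rightLim t).congr'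
      filter_upwards [Ioo_mem_nhdsGT_of_mem (⟨le_rfl, htb⟩ : t ∈ Set.Ico t b)] with s hs
      show α (max a (min s b)) = α s
      rw [min_eq_left hs.2.le, max_eq_right (ht.1.trans hs.1.le)]
    exact rightLim_eq_of_tendsto hten
  · rw [rLim, if_neg (by rw [htb]; exact lt_irrefl b)]
    have hten : Filter.Tendsto (extF a b α) (𝓝[>] t) (𝓝 (α t)) := by
      apply tendsto_const_nhds.congr'
      filter_upwards [self_mem_nhdsWithin] with s (hs : t < s)
      have hbs : b ≤ s := by rw [← htb]; exact hs.le
      show α t = α (max a (min s b))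
      rw [min_eq_right hbs, max_eq_right hab.le, htb]
    exact (rightLim_eq_of_tendsto hten).symm

lemma lLim_extF {a b : ℝ} (hab : a < b) {α : ℝ → ℝ} (hα : MonotoneOn α (Set.Icc a b))
    {t : ℝ} (ht : t ∈ Set.Icc a b) : lLim a α t = leftLim (extF a b α) t := by
  rcases lt_or_eq_of_le ht.1 with hat | hat
  · rw [lLim, if_pos hat]
    have hten : Filter.Tendsto α (𝓝[<] t) (𝓝 (leftLim (extF a b α) t)) := by
      apply ((extF_mono hab.le hα).tendsto_leftLim t).congr'
      filter_upwards [Ioo_mem_nhdsLT_of_mem (⟨hat, le_rfl⟩ : t ∈ Set.Ioc a t)] with s hs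
      show α (max a (min s b)) = α s
      rw [min_eq_left (hs.2.le.trans ht.2), max_eq_right hs.1.le]
    exact leftLim_eq_of_tendsto hten
  · rw [lLim, if_neg (by rw [← hat]; exact lt_irrefl a)]
    have hten : Filter.Tendsto (extF a b α) (𝓝[<] t) (𝓝 (α t)) := by
      apply tendsto_const_nhds.congr'
      filter_upwards [self_mem_nhdsWithin] with s (hs : s < t)
      have hsa : s ≤ a := by rw [hat]; exact hs.le
      show α t = α (max a (min s b))
      rw [min_eq_left (hsa.trans hab.le), max_eq_left hsa, hat]
    exact (leftLim_eq_of_tendsto hten).symm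

lemma muPt_extF {a b : ℝ} (hab : a < b) {α : ℝ → ℝ} (hα : MonotoneOn α (Set.Icc a b))
    {t : ℝ} (ht : t ∈ Set.Icc a b) :
    muPt a b α t = rightLim (extF a b α) t - leftLim (extF a b α) t := by
  rw [muPt, rLim_extF hab hα ht, lLim_extF hab hα ht]

lemma muIoo_extF {a b : ℝ} (hab : a < b) {α : ℝ → ℝ} (hα : MonotoneOn α (Set.Icc a b))
    {c d : ℝ} (hc : c ∈ Set.Icc a b) (hd : d ∈ Set.Icc a b) :
    muIoo a b α c d = leftLim (extF a b α) d - rightLim (extF a b α) c := by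
  rw [muIoo, lLim_extF hab hα hd, rLim_extF hab hα hc]

lemma RDSPartition.x_le {a b : ℝ} (P : RDSPartition a b) :
    ∀ {j : ℕ}, j ≤ P.n → ∀ {i : ℕ}, i ≤ j → P.x i ≤ P.x j := by
  intro j
  induction j with
  | zero => intro _ i hi; rw [Nat.le_zero.mp hi]
  | succ j ih =>
    intro hj i hi
    rcases Nat.eq_or_lt_of_le hi with rfl | hlt
    · exact le_rfl
    · exact (ih (by omega) (Nat.lt_succ_iff.mp hlt)).trans (P.mono j (by omega)).le

lemma RDSPartition.x_mem {a b : ℝ} (P : RDSPartition a b) {i : ℕ} (hi : i ≤ P.n) :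
    P.x i ∈ Set.Icc a b := by
  constructor
  · have h0 := P.x_le hi (Nat.zero_le i); rwa [P.first] at h0
  · have h1 := P.x_le le_rfl hi; rwa [P.last] at h1

end AuxRDS

section AuxRDS2

open Function MeasureTheory

lemma step_integral {a b : ℝ} {g : ℝ → ℝ} (hg : Monotone g) (P : RDSPartition a b) (u : ℝ → ℝ)
    (hu : IsStepOn a b u P) :
    IntegrableOn u (Set.Icc a b) hg.stieltjesFunction.measure ∧
    ∫ t in Set.Icc a b, u t ∂hg.stieltjesFunction.measure =
      (∑ i ∈ Finset.range (P.n + 1),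
        u (P.x i) * (rightLim g (P.x i) - leftLim g (P.x i))) +
      ∑ i ∈ Finset.range P.n,
        u ((P.x i + P.x (i + 1)) / 2) * (leftLim g (P.x (i + 1)) - rightLim g (P.x i)) := by
  set μ := hg.stieltjesFunction.measure with hμ
  have hsing : ∀ t : ℝ, IntegrableOn u {t} μ ∧
      ∫ s in {t}, u s ∂μ = u t * (μ {t}).toReal := by
    intro t
    have hfin : μ {t} < ⊤ := by rw [hμ, meas_singleton' hg]; exact ENNReal.ofReal_lt_top
    have h1 : IntegrableOn (fun _ : ℝ => u t) {t} μ := integrableOn_const hfin.ne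
    have heq : Set.EqOn (fun _ : ℝ => u t) u {t} := fun s hs => by
      rw [Set.mem_singleton_iff.mp hs]
    refine ⟨h1.congr_fun heq (measurableSet_singleton t), ?_⟩
    rw [setIntegral_congr_fun (measurableSet_singleton t) heq.symm, setIntegral_const,
      smul_eq_mul, mul_comm, measureReal_def]
  have hIoo : ∀ i, i < P.n → IntegrableOn u (Set.Ioo (P.x i) (P.x (i + 1))) μ ∧
      ∫ s in Set.Ioo (P.x i) (P.x (i + 1)), u s ∂μ =
        u ((P.x i + P.x (i + 1)) / 2) * (μ (Set.Ioo (P.x i) (P.x (i + 1)))).toReal := by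
    intro i hi
    have hfin : μ (Set.Ioo (P.x i) (P.x (i + 1))) < ⊤ := by
      rw [hμ, meas_Ioo' hg]; exact ENNReal.ofReal_lt_top
    have heq : Set.EqOn (fun _ : ℝ => u ((P.x i + P.x (i + 1)) / 2)) u
        (Set.Ioo (P.x i) (P.x (i + 1))) := fun s hs => (hu i hi s hs).symm
    have h1 : IntegrableOn (fun _ : ℝ => u ((P.x i + P.x (i + 1)) / 2))
        (Set.Ioo (P.x i) (P.x (i + 1))) μ := integrableOn_const hfin.ne
    refine ⟨h1.congr_fun heq measurableSet_Ioo, ?_⟩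
    rw [setIntegral_congr_fun measurableSet_Ioo heq.symm, setIntegral_const,
      smul_eq_mul, mul_comm, measureReal_def]
  have main : ∀ k, k ≤ P.n → IntegrableOn u (Set.Icc (P.x 0) (P.x k)) μ ∧
      ∫ t in Set.Icc (P.x 0) (P.x k), u t ∂μ =
        (∑ i ∈ Finset.range (k + 1), u (P.x i) * (μ {P.x i}).toReal) +
        ∑ i ∈ Finset.range k,
          u ((P.x i + P.x (i + 1)) / 2) * (μ (Set.Ioo (P.x i) (P.x (i + 1)))).toReal := by
    intro k
    induction k with
    | zero =>
      intro _
      rw [Set.Icc_self]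
      refine ⟨(hsing _).1, ?_⟩
      rw [(hsing _).2]
      simp
    | succ k ih =>
      intro hk
      have hk' : k ≤ P.n := by omega
      have hkn : k < P.n := by omega
      obtain ⟨ihI, ihE⟩ := ih hk'
      have hxk : P.x k < P.x (k + 1) := P.mono k hkn
      have h0k : P.x 0 ≤ P.x k := P.x_le hk' (Nat.zero_le k)
      have hsplit : Set.Icc (P.x 0) (P.x (k + 1)) =
          Set.Icc (P.x 0) (P.x k) ∪ (Set.Ioo (P.x k) (P.x (k + 1)) ∪ {P.x (k + 1)}) := by
        rw [Set.Ioo_union_right hxk, Set.Icc_union_Ioc_eq_Icc h0k hxk.le]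
      have hd2 : Disjoint (Set.Ioo (P.x k) (P.x (k + 1))) ({P.x (k + 1)} : Set ℝ) := by
        rw [Set.disjoint_singleton_right]
        exact fun hmem => lt_irrefl _ hmem.2
      have hd1 : Disjoint (Set.Icc (P.x 0) (P.x k))
          (Set.Ioo (P.x k) (P.x (k + 1)) ∪ {P.x (k + 1)}) := by
        rw [Set.disjoint_left]
        intro t ht htu
        rcases htu with h' | h'
        · exact absurd ht.2 (not_le.2 h'.1)
        · rw [Set.mem_singleton_iff] at h'
          subst h'
          exact absurd ht.2 (not_le.2 hxk)
      have hui : IntegrableOn u (Set.Ioo (P.x k) (P.x (k + 1)) ∪ {P.x (k + 1)}) μ :=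
        ((hIoo k hkn).1).union (hsing _).1
      refine ⟨?_, ?_⟩
      · rw [hsplit]; exact ihI.union hui
      · rw [hsplit,
          setIntegral_union hd1 (measurableSet_Ioo.union (measurableSet_singleton _)) ihI hui,
          setIntegral_union hd2 (measurableSet_singleton _) (hIoo k hkn).1 (hsing _).1,
          ihE, (hIoo k hkn).2, (hsing _).2]
        simp only [Finset.sum_range_succ]
        ring
  obtain ⟨hI, hE⟩ := main P.n le_rfl
  rw [P.first, P.last] at hI hE
  refine ⟨hI, ?_⟩
  rw [hE]
  congr 1
  · apply Finset.sum_congr rfl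
    intro i _
    rw [hμ, meas_singleton_toReal hg]
  · apply Finset.sum_congr rfl
    intro i hi
    rw [hμ, meas_Ioo_toReal hg (P.mono i (Finset.mem_range.mp hi))]

lemma stepInt_eq_integral {a b : ℝ} (hab : a < b) {α : ℝ → ℝ}
    (hα : MonotoneOn α (Set.Icc a b)) (P : RDSPartition a b) (u : ℝ → ℝ)
    (hu : IsStepOn a b u P) :
    IntegrableOn u (Set.Icc a b) (extF_mono hab.le hα).stieltjesFunction.measure ∧
    stepInt a b α P u =
      ∫ t in Set.Icc a b, u t ∂(extF_mono hab.le hα).stieltjesFunction.measure := by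
  obtain ⟨hI, hE⟩ := step_integral (extF_mono hab.le hα) P u hu
  refine ⟨hI, ?_⟩
  rw [hE, stepInt]
  congr 1
  · apply Finset.sum_congr rfl
    intro i hi
    rw [muPt_extF hab hα (P.x_mem (Nat.lt_succ_iff.mp (Finset.mem_range.mp hi)))]
  · apply Finset.sum_congr rfl
    intro i hi
    have hi' : i < P.n := Finset.mem_range.mp hi
    rw [muIoo_extF hab hα (P.x_mem hi'.le) (P.x_mem (Nat.succ_le_of_lt hi'))]

end AuxRDS2

section AuxRDS3

open Function MeasureTheory

lemma stepInt_mono {a b : ℝ} (hab : a < b) {α : ℝ → ℝ} (hα : MonotoneOn α (Set.Icc a b))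
    {u v : ℝ → ℝ} {P Q : RDSPartition a b} (hu : IsStepOn a b u P) (hv : IsStepOn a b v Q)
    (hle : ∀ t ∈ Set.Icc a b, v t ≤ u t) :
    stepInt a b α Q v ≤ stepInt a b α P u := by
  obtain ⟨hIu, hEu⟩ := stepInt_eq_integral hab hα P u hu
  obtain ⟨hIv, hEv⟩ := stepInt_eq_integral hab hα Q v hv
  rw [hEu, hEv]
  exact setIntegral_mono_on hIv hIu measurableSet_Icc hle

lemma comb_monoOn {a b r₁ r₂ : ℝ} {α β : ℝ → ℝ} (hα : MonotoneOn α (Set.Icc a b))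
    (hβ : MonotoneOn β (Set.Icc a b)) (hr₁ : 0 ≤ r₁) (hr₂ : 0 ≤ r₂) :
    MonotoneOn (fun t => r₁ * α t + r₂ * β t) (Set.Icc a b) := fun s hs t ht hst =>
  add_le_add (mul_le_mul_of_nonneg_left (hα hs ht hst) hr₁)
    (mul_le_mul_of_nonneg_left (hβ hs ht hst) hr₂)

lemma stepInt_comb {a b r₁ r₂ : ℝ} (hab : a < b) {α β : ℝ → ℝ}
    (hα : MonotoneOn α (Set.Icc a b)) (hβ : MonotoneOn β (Set.Icc a b))
    (hr₁ : 0 ≤ r₁) (hr₂ : 0 ≤ r₂) (P : RDSPartition a b) (w : ℝ → ℝ) :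
    stepInt a b (fun t => r₁ * α t + r₂ * β t) P w =
      r₁ * stepInt a b α P w + r₂ * stepInt a b β P w := by
  have hγ : MonotoneOn (fun t => r₁ * α t + r₂ * β t) (Set.Icc a b) :=
    comb_monoOn hα hβ hr₁ hr₂
  have hco : extF a b (fun t => r₁ * α t + r₂ * β t) =
      fun s => r₁ * extF a b α s + r₂ * extF a b β s := rfl
  have hA := extF_mono hab.le hα
  have hB := extF_mono hab.le hβ
  have hmuPt : ∀ t ∈ Set.Icc a b, muPt a b (fun t => r₁ * α t + r₂ * β t) t =
      r₁ * muPt a b α t + r₂ * muPt a b β t := by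
    intro t ht
    rw [muPt_extF hab hγ ht, muPt_extF hab hα ht, muPt_extF hab hβ ht, hco,
      rightLim_linear hA hB, leftLim_linear hA hB]
    ring
  have hmuIoo : ∀ c ∈ Set.Icc a b, ∀ d ∈ Set.Icc a b,
      muIoo a b (fun t => r₁ * α t + r₂ * β t) c d =
      r₁ * muIoo a b α c d + r₂ * muIoo a b β c d := by
    intro c hc d hd
    rw [muIoo_extF hab hγ hc hd, muIoo_extF hab hα hc hd, muIoo_extF hab hβ hc hd, hco,
      rightLim_linear hA hB, leftLim_linear hA hB]
    ring
  rw [stepInt, stepInt, stepInt]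
  have e1 : ∑ i ∈ Finset.range (P.n + 1),
      w (P.x i) * muPt a b (fun t => r₁ * α t + r₂ * β t) (P.x i) =
      ∑ i ∈ Finset.range (P.n + 1), (r₁ * (w (P.x i) * muPt a b α (P.x i)) +
        r₂ * (w (P.x i) * muPt a b β (P.x i))) := by
    apply Finset.sum_congr rfl
    intro i hi
    rw [hmuPt _ (P.x_mem (Nat.lt_succ_iff.mp (Finset.mem_range.mp hi)))]
    ring
  have e2 : ∑ i ∈ Finset.range P.n,
      w ((P.x i + P.x (i + 1)) / 2) *
        muIoo a b (fun t => r₁ * α t + r₂ * β t) (P.x i) (P.x (i + 1)) =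
      ∑ i ∈ Finset.range P.n,
        (r₁ * (w ((P.x i + P.x (i + 1)) / 2) * muIoo a b α (P.x i) (P.x (i + 1))) +
         r₂ * (w ((P.x i + P.x (i + 1)) / 2) * muIoo a b β (P.x i) (P.x (i + 1)))) := by
    apply Finset.sum_congr rfl
    intro i hi
    have hi' : i < P.n := Finset.mem_range.mp hi
    rw [hmuIoo _ (P.x_mem hi'.le) _ (P.x_mem (Nat.succ_le_of_lt hi'))]
    ring
  rw [e1, e2, Finset.sum_add_distrib, Finset.sum_add_distrib, ← Finset.mul_sum,
    ← Finset.mul_sum, ← Finset.mul_sum, ← Finset.mul_sum]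
  ring

/-- The set whose infimum is `upperRDS`. -/
def USet (a b : ℝ) (α f : ℝ → ℝ) : Set ℝ :=
  { r | ∃ (u : ℝ → ℝ) (P : RDSPartition a b), IsStepOn a b u P ∧
    (∀ t ∈ Set.Icc a b, f t ≤ u t) ∧ r = stepInt a b α P u }

/-- The set whose supremum is `lowerRDS`. -/
def LSet (a b : ℝ) (α f : ℝ → ℝ) : Set ℝ :=
  { r | ∃ (v : ℝ → ℝ) (P : RDSPartition a b), IsStepOn a b v P ∧
    (∀ t ∈ Set.Icc a b, v t ≤ f t) ∧ r = stepInt a b α P v }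

lemma upperRDS_def (a b : ℝ) (α f : ℝ → ℝ) : upperRDS a b α f = sInf (USet a b α f) := rfl

lemma lowerRDS_def (a b : ℝ) (α f : ℝ → ℝ) : lowerRDS a b α f = sSup (LSet a b α f) := rfl

/-- The trivial partition `a < b`. -/
noncomputable def trivP {a b : ℝ} (hab : a < b) : RDSPartition a b where
  n := 1
  x := fun i => if i = 0 then a else b
  mono := by
    intro i hi
    have : i = 0 := by omega
    subst this
    simpa using hab
  first := by simp
  last := by simp

lemma isStepOn_const {a b : ℝ} (c : ℝ) (P : RDSPartition a b) :
    IsStepOn a b (fun _ => c) P := fun _ _ _ _ => rfl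

lemma USet_nonempty {a b : ℝ} (hab : a < b) {α f : ℝ → ℝ} (hf : BddOn a b f) :
    (USet a b α f).Nonempty := by
  obtain ⟨M, hM⟩ := hf
  exact ⟨_, fun _ => M, trivP hab, isStepOn_const M _,
    fun t ht => (abs_le.mp (hM t ht)).2, rfl⟩

lemma LSet_nonempty {a b : ℝ} (hab : a < b) {α f : ℝ → ℝ} (hf : BddOn a b f) :
    (LSet a b α f).Nonempty := by
  obtain ⟨M, hM⟩ := hf
  exact ⟨_, fun _ => -M, trivP hab, isStepOn_const (-M) _,
    fun t ht => (abs_le.mp (hM t ht)).1, rfl⟩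

lemma LSet_le_USet {a b : ℝ} (hab : a < b) {α f : ℝ → ℝ} (hα : MonotoneOn α (Set.Icc a b))
    {r s : ℝ} (hr : r ∈ LSet a b α f) (hs : s ∈ USet a b α f) : r ≤ s := by
  obtain ⟨v, Q, hv, hvf, rfl⟩ := hr
  obtain ⟨u, P, hu, hfu, rfl⟩ := hs
  exact stepInt_mono hab hα hu hv fun t ht => (hvf t ht).trans (hfu t ht)

lemma USet_bddBelow {a b : ℝ} (hab : a < b) {α f : ℝ → ℝ} (hα : MonotoneOn α (Set.Icc a b))
    (hf : BddOn a b f) : BddBelow (USet a b α f) := by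
  obtain ⟨r, hr⟩ := LSet_nonempty (α := α) hab hf
  exact ⟨r, fun s hs => LSet_le_USet hab hα hr hs⟩

lemma LSet_bddAbove {a b : ℝ} (hab : a < b) {α f : ℝ → ℝ} (hα : MonotoneOn α (Set.Icc a b))
    (hf : BddOn a b f) : BddAbove (LSet a b α f) := by
  obtain ⟨s, hs⟩ := USet_nonempty (α := α) hab hf
  exact ⟨s, fun r hr => LSet_le_USet hab hα hr hs⟩

lemma lower_le_upper {a b : ℝ} (hab : a < b) {α f : ℝ → ℝ} (hα : MonotoneOn α (Set.Icc a b))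
    (hf : BddOn a b f) : lowerRDS a b α f ≤ upperRDS a b α f := by
  rw [lowerRDS_def, upperRDS_def]
  exact csSup_le (LSet_nonempty hab hf) fun r hr =>
    le_csInf (USet_nonempty hab hf) fun s hs => LSet_le_USet hab hα hr hs

lemma half_integrable {a b : ℝ} (hab : a < b) {α β : ℝ → ℝ}
    (hα : MonotoneOn α (Set.Icc a b)) (hβ : MonotoneOn β (Set.Icc a b))
    {r₁ r₂ : ℝ} (hr₁ : 0 < r₁) (hr₂ : 0 < r₂) {f : ℝ → ℝ} (hf : BddOn a b f)
    (h : RDSIntegrableInc a b (fun t => r₁ * α t + r₂ * β t) f) :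
    RDSIntegrableInc a b α f := by
  have hγ : MonotoneOn (fun t => r₁ * α t + r₂ * β t) (Set.Icc a b) :=
    comb_monoOn hα hβ hr₁.le hr₂.le
  refine le_antisymm (lower_le_upper hab hα hf) ?_
  by_contra hcon
  push_neg at hcon
  set ε := (upperRDS a b α f - lowerRDS a b α f) / 2 with hε
  have hεpos : 0 < ε := by rw [hε]; linarith
  -- pick u and v nearly achieving the γ-envelopes
  have hUne := USet_nonempty (α := fun t => r₁ * α t + r₂ * β t) hab hf
  have hLne := LSet_nonempty (α := fun t => r₁ * α t + r₂ * β t) hab hf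
  obtain ⟨su, hsu, hsu'⟩ := exists_lt_of_csInf_lt hUne
    (lt_add_of_pos_right (sInf (USet a b (fun t => r₁ * α t + r₂ * β t) f))
      (by positivity : (0:ℝ) < r₁ * ε / 2))
  obtain ⟨sv, hsv, hsv'⟩ := exists_lt_of_lt_csSup hLne
    (by linarith [ (by positivity : (0:ℝ) < r₁ * ε / 2) ] :
      sSup (LSet a b (fun t => r₁ * α t + r₂ * β t) f) - r₁ * ε / 2 <
      sSup (LSet a b (fun t => r₁ * α t + r₂ * β t) f))
  obtain ⟨u, Pu, hu, hfu, rfl⟩ := hsu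
  obtain ⟨v, Qv, hv, hvf, rfl⟩ := hsv
  have he : sSup (LSet a b (fun t => r₁ * α t + r₂ * β t) f) =
      sInf (USet a b (fun t => r₁ * α t + r₂ * β t) f) := h
  have hgap : stepInt a b (fun t => r₁ * α t + r₂ * β t) Pu u -
      stepInt a b (fun t => r₁ * α t + r₂ * β t) Qv v < r₁ * ε := by
    linarith
  have hlinu := stepInt_comb hab hα hβ hr₁.le hr₂.le Pu u
  have hlinv := stepInt_comb hab hα hβ hr₁.le hr₂.le Qv v
  have hUle : upperRDS a b α f ≤ stepInt a b α Pu u := by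
    rw [upperRDS_def]
    exact csInf_le (USet_bddBelow hab hα hf) ⟨u, Pu, hu, hfu, rfl⟩
  have hLge : stepInt a b α Qv v ≤ lowerRDS a b α f := by
    rw [lowerRDS_def]
    exact le_csSup (LSet_bddAbove hab hα hf) ⟨v, Qv, hv, hvf, rfl⟩
  have hβcomp : stepInt a b β Qv v ≤ stepInt a b β Pu u :=
    stepInt_mono hab hβ hu hv fun t ht => (hvf t ht).trans (hfu t ht)
  have hβmul : r₂ * stepInt a b β Qv v ≤ r₂ * stepInt a b β Pu u :=
    mul_le_mul_of_nonneg_left hβcomp hr₂.le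
  have hD : r₁ * stepInt a b α Pu u - r₁ * stepInt a b α Qv v < r₁ * ε := by linarith
  have hD' : stepInt a b α Pu u - stepInt a b α Qv v < ε := by
    have := (mul_lt_mul_iff_right₀ hr₁).mp
      (by linarith : r₁ * (stepInt a b α Pu u - stepInt a b α Qv v) < r₁ * ε)
    linarith
  have : upperRDS a b α f - lowerRDS a b α f < ε := by linarith
  rw [hε] at this
  linarith

end AuxRDS3


theorem stmt6 (a b : ℝ) (hab : a < b) (α β : ℝ → ℝ)
    (hα : MonotoneOn α (Set.Icc a b)) (hβ : MonotoneOn β (Set.Icc a b))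
    (r₁ r₂ : ℝ) (hr₁ : 0 < r₁) (hr₂ : 0 < r₂) (f : ℝ → ℝ) (hf : BddOn a b f)
    (h : RDSIntegrableInc a b (fun t => r₁ * α t + r₂ * β t) f) :
    RDSIntegrableInc a b α f ∧ RDSIntegrableInc a b β f := by
  have h' : RDSIntegrableInc a b (fun t => r₂ * β t + r₁ * α t) f := by
    have hco : (fun t => r₂ * β t + r₁ * α t) = (fun t => r₁ * α t + r₂ * β t) := by
      funext t; ring
    rw [hco]
    exact h
  exact ⟨half_integrable hab hα hβ hr₁ hr₂ hf h,
    half_integrable hab hβ hα hr₂ hr₁ hf h'⟩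
end
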